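/- Let p ≥ 1 be real and let P_n(X_n, c_X) be the set of all types P_X ∈ P_n(X_n) satisfying E_{P_X}[|X|^p] ≤ c_X. Then |P_n(X_n, c_X)| ≤ ((n+1)c)^{c̃ · n^{(1 + pα)/(1+p)}}, where c = (2 c_X^{1/p} + 1)^{1/(1 + 1/p + α)} and c̃ = (1 + 1/p + α)(4 c_X^{1/p} + 1)^{p/(1+p)}. In particular, the number of such types is sub-exponential in n for every α ∈ (0,1). -/
import Mathlib


open Set

noncomputable section

/-- A type with denominator `n` on the lattice alphabet `{iΔ : i ∈ ℤ}`. -/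
def IsType (n : ℕ) (Δ : ℝ) (P : ℝ → ℝ) : Prop :=
  (∀ x, 0 ≤ P x) ∧ (∀ x, P x ≠ 0 → ∃ i : ℤ, x = (i : ℝ) * Δ) ∧
    (∀ x, ∃ k : ℕ, P x = (k : ℝ) / n) ∧ (Function.support P).Finite ∧ ∑ᶠ x, P x = 1

/-- `P_n(X_n, c_X)`: the set of all types with denominator `n` on the lattice alphabet
satisfying the generalized power constraint `E_{P_X}[|X|^p] ≤ c_X`. -/
def constrainedTypes (n : ℕ) (Δ p cX : ℝ) : Set (ℝ → ℝ) :=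
  {P | IsType n Δ P ∧ (∑ᶠ x, P x * |x| ^ p) ≤ cX}

open Classical in
/-- numerator of `P (i Δ)` -/
def num (n : ℕ) (Δ : ℝ) (P : ℝ → ℝ) (i : ℤ) : ℕ := ⌊(n : ℝ) * P ((i : ℝ) * Δ)⌋₊

lemma num_spec {n : ℕ} {Δ : ℝ} {P : ℝ → ℝ} (hn : 0 < n)
    (h3 : ∀ x, ∃ k : ℕ, P x = (k : ℝ) / n) (hle : ∀ x, P x ≤ 1) (i : ℤ) :
    P ((i : ℝ) * Δ) = (num n Δ P i : ℝ) / n ∧ num n Δ P i ≤ n := by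
  obtain ⟨k, hk⟩ := h3 ((i : ℝ) * Δ)
  have hn' : (0:ℝ) < n := by exact_mod_cast hn
  have hnum : num n Δ P i = k := by
    unfold num
    rw [hk, mul_div_cancel₀ _ (ne_of_gt hn'), Nat.floor_natCast]
  have hkn : k ≤ n := by
    have := hle ((i : ℝ) * Δ)
    rw [hk, div_le_one hn'] at this
    exact_mod_cast this
  exact ⟨by rw [hnum, hk], by rw [hnum]; exact hkn⟩

theorem count_types (n L I K : ℕ) (hn : 0 < n) (Δ : ℝ) (S : Set (ℝ → ℝ))
    (hS : ∀ P ∈ S, IsType n Δ P)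
    (hsupp : ∀ P ∈ S, ∀ i : ℤ, P ((i : ℝ) * Δ) ≠ 0 → |i| ≤ (I : ℤ))
    (hbig : ∀ P ∈ S,
      ((Finset.Icc (-(I : ℤ)) I).filter (fun i => (L : ℤ) < |i| ∧ P ((i : ℝ) * Δ) ≠ 0)).card ≤ K) :
    S.Finite ∧ S.ncard ≤ (n + 1) ^ (2 * L) * ((2 * I + 1) * n + 1) ^ K := by
  classical
  set smallF : Finset ℤ := (Finset.Icc (-(L : ℤ)) L).erase 0 with hsmallF
  set IccI : Finset ℤ := Finset.Icc (-(I : ℤ)) I with hIccI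
  -- encoding
  set clampI : ℤ → IccI := fun i => ⟨max (-(I : ℤ)) (min (I : ℤ) i), by
    simp only [hIccI, Finset.mem_Icc]; omega⟩ with hclampI
  set massS : ℕ → Fin (n + 1) := fun k => ⟨min k n, by omega⟩ with hmassS
  set massB : ℕ → Fin n := fun k => ⟨min (k - 1) (n - 1), by omega⟩ with hmassB
  set bigS : (ℝ → ℝ) → Finset ℤ := fun P =>
    IccI.filter (fun i => (L : ℤ) < |i| ∧ P ((i : ℝ) * Δ) ≠ 0) with hbigS
  set enc : (ℝ → ℝ) → ((smallF → Fin (n + 1)) × (Fin K → Option (IccI × Fin n))) := fun P =>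
    (fun i => massS (num n Δ P i.1),
     fun j => ((bigS P).sort (· ≤ ·))[(j : ℕ)]?.map
       (fun i => (clampI i, massB (num n Δ P i)))) with henc
  have hinj : Set.InjOn enc S := by
    intro P hP P' hP' hE
    obtain ⟨h1, h2, h3, h4, h5⟩ := hS P hP
    obtain ⟨h1', h2', h3', h4', h5'⟩ := hS P' hP'
    have hle : ∀ x, P x ≤ 1 := fun x => h5 ▸ single_le_finsum x h4 h1
    have hle' : ∀ x, P' x ≤ 1 := fun x => h5' ▸ single_le_finsum x h4' h1'
    have hns := num_spec (Δ := Δ) hn h3 hle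
    have hns' := num_spec (Δ := Δ) hn h3' hle'
    -- nonzero implies num ≥ 1
    have hpos : ∀ i : ℤ, P ((i:ℝ) * Δ) ≠ 0 → 1 ≤ num n Δ P i := by
      intro i hi
      rcases Nat.eq_zero_or_pos (num n Δ P i) with h | h
      · exact absurd ((hns i).1.trans (by rw [h]; simp)) hi
      · exact h
    have hpos' : ∀ i : ℤ, P' ((i:ℝ) * Δ) ≠ 0 → 1 ≤ num n Δ P' i := by
      intro i hi
      rcases Nat.eq_zero_or_pos (num n Δ P' i) with h | h
      · exact absurd ((hns' i).1.trans (by rw [h]; simp)) hi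
      · exact h
    have hE1 := congrArg Prod.fst hE
    have hE2 := congrArg Prod.snd hE
    simp only [henc] at hE1 hE2
    -- small region
    have hsmall : ∀ i : ℤ, i ≠ 0 → |i| ≤ (L : ℤ) → P ((i:ℝ) * Δ) = P' ((i:ℝ) * Δ) := by
      intro i hi0 hiL
      have hmem : i ∈ smallF := by
        rw [abs_le] at hiL
        simp [hsmallF, Finset.mem_erase, Finset.mem_Icc, hi0]
        omega
      have := congrFun hE1 ⟨i, hmem⟩
      simp only [hmassS, Fin.mk.injEq] at this
      have e1 : min (num n Δ P i) n = num n Δ P i := min_eq_left (hns i).2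
      have e2 : min (num n Δ P' i) n = num n Δ P' i := min_eq_left (hns' i).2
      rw [e1, e2] at this
      rw [(hns i).1, (hns' i).1, this]
    -- big region: the sorted lists coincide
    have hl : ((bigS P).sort (· ≤ ·)) = ((bigS P').sort (· ≤ ·)) := by
      apply List.ext_getElem?
      intro j
      by_cases hj : j < K
      · have := congrFun hE2 ⟨j, hj⟩
        simp only at this
        cases hx : ((bigS P).sort (· ≤ ·))[(j : ℕ)]? with
        | none =>
          cases hx' : ((bigS P').sort (· ≤ ·))[(j : ℕ)]? with
          | none => rfl
          | some i' => rw [hx, hx'] at this; simp at this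
        | some i =>
          cases hx' : ((bigS P').sort (· ≤ ·))[(j : ℕ)]? with
          | none => rw [hx, hx'] at this; simp at this
          | some i' =>
            rw [hx, hx'] at this
            simp only [Option.map_some, Option.some.injEq, Prod.mk.injEq] at this
            have hiF : i ∈ bigS P := by
              have : i ∈ (bigS P).sort (· ≤ ·) := by
                exact List.mem_of_getElem? hx
              rwa [Finset.mem_sort] at this
            have hiF' : i' ∈ bigS P' := by
              have : i' ∈ (bigS P').sort (· ≤ ·) := by
                exact List.mem_of_getElem? hx'
              rwa [Finset.mem_sort] at this
            have hiI : i ∈ IccI := Finset.mem_of_mem_filter _ hiF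
            have hiI' : i' ∈ IccI := Finset.mem_of_mem_filter _ hiF'
            have : (clampI i : ℤ) = (clampI i' : ℤ) := by rw [this.1]
            simp only [hclampI] at this
            simp only [hIccI, Finset.mem_Icc] at hiI hiI'
            congr 1
            omega
      · have len1 : ((bigS P).sort (· ≤ ·)).length ≤ K := by
          rw [Finset.length_sort]; exact hbig P hP
        have len2 : ((bigS P').sort (· ≤ ·)).length ≤ K := by
          rw [Finset.length_sort]; exact hbig P' hP'
        rw [List.getElem?_eq_none (by omega), List.getElem?_eq_none (by omega)]
    -- equal big supports
    have hFeq : bigS P = bigS P' := by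
      ext i
      rw [← Finset.mem_sort (α := ℤ) (· ≤ ·), hl, Finset.mem_sort]
    have hbigmass : ∀ i ∈ bigS P, P ((i:ℝ) * Δ) = P' ((i:ℝ) * Δ) := by
      intro i hi
      have hmemlist : i ∈ (bigS P).sort (· ≤ ·) := (Finset.mem_sort _).2 hi
      obtain ⟨j, hjlen, hji⟩ := List.mem_iff_getElem.mp hmemlist
      have hjK : j < K := lt_of_lt_of_le hjlen (by rw [Finset.length_sort]; exact hbig P hP)
      have hEj := congrFun hE2 ⟨j, hjK⟩
      have hx : ((bigS P).sort (· ≤ ·))[(j : ℕ)]? = some i := by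
        rw [List.getElem?_eq_getElem hjlen, hji]
      have hx' : ((bigS P').sort (· ≤ ·))[(j : ℕ)]? = some i := by
        rw [← hl]; exact hx
      simp only [Fin.val_mk, hx, hx', Option.map_some, Option.some.injEq,
        Prod.mk.injEq] at hEj
      have hmass : (massB (num n Δ P i) : ℕ) = (massB (num n Δ P' i) : ℕ) := by
        rw [hEj.2]
      have hPne : P ((i:ℝ) * Δ) ≠ 0 := (Finset.mem_filter.mp hi).2.2
      have hP'ne : P' ((i:ℝ) * Δ) ≠ 0 := by
        have : i ∈ bigS P' := hFeq ▸ hi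
        exact (Finset.mem_filter.mp this).2.2
      have b1 := hpos i hPne
      have b2 := hpos' i hP'ne
      have c1 := (hns i).2
      have c2 := (hns' i).2
      simp only [hmassB] at hmass
      have : num n Δ P i = num n Δ P' i := by omega
      rw [(hns i).1, (hns' i).1, this]
    -- all indices of large absolute value agree
    have hbigall : ∀ i : ℤ, (L : ℤ) < |i| → P ((i:ℝ) * Δ) = P' ((i:ℝ) * Δ) := by
      intro i hiL
      by_cases hPi : P ((i:ℝ) * Δ) = 0
      · by_cases hP'i : P' ((i:ℝ) * Δ) = 0
        · rw [hPi, hP'i]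
        · exfalso
          have hiI : |i| ≤ (I : ℤ) := hsupp P' hP' i hP'i
          have : i ∈ bigS P' := by
            rw [abs_le] at hiI
            simp only [hbigS, Finset.mem_filter, hIccI, Finset.mem_Icc]
            exact ⟨⟨hiI.1, hiI.2⟩, hiL, hP'i⟩
          have hiP : i ∈ bigS P := hFeq ▸ this
          have := hbigmass i hiP
          exact hP'i (this ▸ hPi)
      · have hiI : |i| ≤ (I : ℤ) := hsupp P hP i hPi
        have : i ∈ bigS P := by
          rw [abs_le] at hiI
          simp only [hbigS, Finset.mem_filter, hIccI, Finset.mem_Icc]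
          exact ⟨⟨hiI.1, hiI.2⟩, hiL, hPi⟩
        exact hbigmass i this
    -- all nonzero points agree
    have hall : ∀ x : ℝ, x ≠ 0 → P x = P' x := by
      intro x hx0
      have key : ∀ i : ℤ, i ≠ 0 → P ((i:ℝ) * Δ) = P' ((i:ℝ) * Δ) := by
        intro i hi0
        by_cases hiL : |i| ≤ (L : ℤ)
        · exact hsmall i hi0 hiL
        · exact hbigall i (by omega)
      by_cases hPx : P x = 0
      · by_cases hP'x : P' x = 0
        · rw [hPx, hP'x]
        · obtain ⟨i, rfl⟩ := h2' x hP'x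
          have hi0 : i ≠ 0 := by rintro rfl; simp at hx0
          exact key i hi0
      · obtain ⟨i, rfl⟩ := h2 x hPx
        have hi0 : i ≠ 0 := by rintro rfl; simp at hx0
        exact key i hi0
    -- value at zero
    have h0 : P 0 = P' 0 := by
      set u : Finset ℝ := insert 0 (h4.toFinset ∪ h4'.toFinset) with hu
      have hsub : Function.support P ⊆ ↑u := by
        intro x hx
        simp only [hu, Finset.coe_insert, Set.mem_insert_iff, Finset.coe_union,
          Set.mem_union, Set.Finite.coe_toFinset]
        exact Or.inr (Or.inl hx)
      have hsub' : Function.support P' ⊆ ↑u := by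
        intro x hx
        simp only [hu, Finset.coe_insert, Set.mem_insert_iff, Finset.coe_union,
          Set.mem_union, Set.Finite.coe_toFinset]
        exact Or.inr (Or.inr hx)
      have e1 : ∑ᶠ x, P x = ∑ x ∈ u, P x := finsum_eq_sum_of_support_subset _ hsub
      have e1' : ∑ᶠ x, P' x = ∑ x ∈ u, P' x := finsum_eq_sum_of_support_subset _ hsub'
      have hsum : ∑ x ∈ u, P x = ∑ x ∈ u, P' x := by rw [← e1, ← e1', h5, h5']
      have h0mem : (0:ℝ) ∈ u := Finset.mem_insert_self _ _
      rw [← Finset.sum_erase_add u P h0mem, ← Finset.sum_erase_add u P' h0mem] at hsum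
      have herase : ∑ x ∈ u.erase 0, P x = ∑ x ∈ u.erase 0, P' x :=
        Finset.sum_congr rfl (fun x hx => hall x (Finset.ne_of_mem_erase hx))
      linarith
    funext x
    by_cases hx : x = 0
    · rw [hx]; exact h0
    · exact hall x hx
  have hfin : S.Finite := Set.Finite.of_finite_image (Set.toFinite _) hinj
  refine ⟨hfin, ?_⟩
  have hcard : S.ncard ≤ Fintype.card ((smallF → Fin (n + 1)) × (Fin K → Option (IccI × Fin n))) := by
    calc S.ncard = (enc '' S).ncard := (Set.ncard_image_of_injOn hinj).symm
      _ ≤ (Set.univ : Set ((smallF → Fin (n + 1)) × (Fin K → Option (IccI × Fin n)))).ncard :=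
          Set.ncard_le_ncard (Set.subset_univ _) Set.finite_univ
      _ = _ := by rw [Set.ncard_univ, Nat.card_eq_fintype_card]
  have hsc : smallF.card = 2 * L := by
    rw [hsmallF, Finset.card_erase_of_mem (by simp), Int.card_Icc]
    omega
  have hic : IccI.card = 2 * I + 1 := by
    rw [hIccI, Int.card_Icc]
    omega
  calc S.ncard ≤ _ := hcard
    _ = (n + 1) ^ (2 * L) * ((2 * I + 1) * n + 1) ^ K := by
      rw [Fintype.card_prod, Fintype.card_fun, Fintype.card_fun, Fintype.card_option,
        Fintype.card_prod, Fintype.card_coe, Fintype.card_coe, Fintype.card_fin,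
        Fintype.card_fin, Fintype.card_fin, hsc, hic]


open Real


lemma two_le_rpow {p : ℝ} (hp : 1 ≤ p) : (2:ℝ) ≤ (1 + 1/p) ^ p := by
  have hp0 : 0 < p := lt_of_lt_of_le one_pos hp
  have h1p : 0 < 1/p := by positivity
  have h := one_add_mul_self_le_rpow_one_add (s := 1/p) (by linarith) hp
  rw [mul_one_div_cancel hp0.ne'] at h
  linarith

lemma key_exponent (n : ℕ) (hn : 0 < n) (p cX α : ℝ) (hp : 1 ≤ p) (hc : 0 < cX)
    (hα0 : 0 < α) (hα1 : α < 1) :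
    2 * (((1+1/p+α)/2) ^ (1/(1+p)) * (cX^(1/p)) ^ (p/(1+p)) * (n:ℝ) ^ ((1-α)/(1+p)))
        * (n:ℝ) ^ α
      + (1+1/p+α) * ((n:ℝ) * cX /
          (((1+1/p+α)/2) ^ (1/(1+p)) * (cX^(1/p)) ^ (p/(1+p)) * (n:ℝ) ^ ((1-α)/(1+p))) ^ p)
      ≤ (1+1/p+α) * (4 * cX^(1/p) + 1) ^ (p/(1+p)) * (n:ℝ) ^ ((1+p*α)/(1+p)) := by
  have hp0 : 0 < p := lt_of_lt_of_le one_pos hp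
  have hp1 : (0:ℝ) < 1 + p := by linarith
  have hn0 : (0:ℝ) < n := by exact_mod_cast hn
  set γ : ℝ := cX ^ (1/p) with hγdef
  have hγ : 0 < γ := rpow_pos_of_pos hc _
  set s : ℝ := 1 + 1/p + α with hsdef
  have h1p : (0:ℝ) < 1/p := by positivity
  have hs0 : 0 < s := by simp only [hsdef]; linarith
  set r : ℝ := 1/(1+p) with hrdef
  set q : ℝ := p/(1+p) with hqdef
  have hr0 : 0 < r := by positivity
  have hq0 : 0 < q := by positivity
  set ν : ℝ := (1+p*α)/(1+p) with hνdef
  set e : ℝ := (1-α)/(1+p) with hedef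
  set T : ℝ := (s/2) ^ r * γ ^ q * (n:ℝ) ^ e with hTdef
  have hT : 0 < T := by positivity
  have hTp : 0 < T ^ p := rpow_pos_of_pos hT _
  have hcX : γ ^ p = cX := by
    rw [hγdef, ← rpow_mul hc.le, one_div_mul_cancel hp0.ne', rpow_one]
  have hA : 2 * T * (n:ℝ) ^ α = 2 * (s/2) ^ r * γ ^ q * (n:ℝ) ^ ν := by
    rw [hTdef]
    rw [mul_assoc, mul_assoc, mul_assoc, ← rpow_add hn0]
    have : e + α = ν := by rw [hedef, hνdef]; field_simp; ring
    rw [this]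
    ring
  have hTpval : T ^ p = (s/2) ^ (r*p) * γ ^ (q*p) * (n:ℝ) ^ (e*p) := by
    rw [hTdef, mul_rpow (by positivity) (by positivity),
      mul_rpow (by positivity) (by positivity),
      ← rpow_mul (by positivity), ← rpow_mul hγ.le, ← rpow_mul hn0.le]
  have hB : s * ((n:ℝ) * cX / T ^ p) = 2 * (s/2) ^ r * γ ^ q * (n:ℝ) ^ ν := by
    rw [← mul_div_assoc, div_eq_iff hTp.ne', eq_comm]
    calc 2 * (s/2) ^ r * γ ^ q * (n:ℝ) ^ ν * T ^ p
        = 2 * ((s/2) ^ (r*p) * (s/2) ^ r) * (γ ^ (q*p) * γ ^ q) * ((n:ℝ) ^ (e*p) * (n:ℝ) ^ ν) := by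
          rw [hTpval]; ring
      _ = 2 * (s/2) ^ (r*p + r) * γ ^ (q*p + q) * (n:ℝ) ^ (e*p + ν) := by
          rw [← rpow_add (by positivity : (0:ℝ) < s/2), ← rpow_add hγ, ← rpow_add hn0]
      _ = 2 * (s/2) * cX * (n:ℝ) := by
          have e1 : r*p + r = 1 := by rw [hrdef]; field_simp; ring
          have e2 : q*p + q = p := by rw [hqdef]; field_simp; ring
          have e3 : e*p + ν = 1 := by rw [hedef, hνdef]; field_simp; ring
          rw [e1, e2, e3, rpow_one, rpow_one, hcX]
      _ = s * ((n:ℝ) * cX) := by ring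
  rw [hA, hB]
  have key1 : (2*s) ^ r ≤ s := by
    have h2 : (2:ℝ) ≤ s ^ p := by
      calc (2:ℝ) ≤ (1+1/p) ^ p := two_le_rpow hp
        _ ≤ s ^ p := by
            apply rpow_le_rpow (by positivity) _ hp0.le
            rw [hsdef]; linarith
    have h2s : 2*s ≤ s ^ (1+p) := by
      have hh : s ^ (1+p) = s * s ^ p := by
        rw [rpow_add hs0, rpow_one]
      rw [hh]
      nlinarith
    calc (2*s) ^ r ≤ (s ^ (1+p)) ^ r := rpow_le_rpow (by positivity) h2s hr0.le
      _ = s ^ ((1+p)*r) := by rw [← rpow_mul hs0.le]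
      _ = s := by
          have hh : (1+p)*r = 1 := by rw [hrdef]; field_simp
          rw [hh, rpow_one]
  have key2 : 4 * (s/2) ^ r ≤ s * 4 ^ q := by
    have h4r : (0:ℝ) < 4 ^ r := rpow_pos_of_pos (by norm_num) _
    have e5 : (s/2) ^ r * (4:ℝ) ^ r = (2*s) ^ r := by
      rw [← mul_rpow (by positivity) (by norm_num)]
      congr 1; ring
    have e4 : (4:ℝ) ^ q * 4 ^ r = 4 := by
      rw [← rpow_add (by norm_num)]
      have hh : q + r = 1 := by rw [hqdef, hrdef]; field_simp; ring
      rw [hh, rpow_one]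
    have hmul : (4 * (s/2) ^ r) * 4 ^ r ≤ (s * 4 ^ q) * 4 ^ r := by
      calc (4 * (s/2) ^ r) * 4 ^ r = 4 * ((s/2) ^ r * 4 ^ r) := by ring
        _ = 4 * (2*s) ^ r := by rw [e5]
        _ ≤ 4 * s := by linarith [key1]
        _ = s * (4 ^ q * 4 ^ r) := by rw [e4]; ring
        _ = (s * 4 ^ q) * 4 ^ r := by ring
    exact le_of_mul_le_mul_right hmul h4r
  have key3 : 4 * (s/2) ^ r * γ ^ q ≤ s * (4*γ+1) ^ q := by
    have hγq : (0:ℝ) ≤ γ ^ q := (rpow_pos_of_pos hγ _).le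
    calc 4 * (s/2) ^ r * γ ^ q ≤ (s * 4 ^ q) * γ ^ q :=
          mul_le_mul_of_nonneg_right key2 hγq
      _ = s * (4*γ) ^ q := by
          rw [mul_assoc, ← mul_rpow (by norm_num) hγ.le]
      _ ≤ s * (4*γ+1) ^ q :=
          mul_le_mul_of_nonneg_left (rpow_le_rpow (by positivity) (by linarith) hq0.le) hs0.le
  have hνn : (0:ℝ) ≤ (n:ℝ) ^ ν := (rpow_pos_of_pos hn0 _).le
  nlinarith [mul_le_mul_of_nonneg_right key3 hνn]

set_option maxHeartbeats 1000000 in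
lemma chain (n L I K : ℕ) (hn : 0 < n) (p cX α T : ℝ) (hp : 1 ≤ p) (hc : 0 < cX)
    (hα0 : 0 < α) (hα1 : α < 1)
    (hTdef : T = ((1+1/p+α)/2) ^ (1/(1+p)) * (cX^(1/p)) ^ (p/(1+p)) * (n:ℝ) ^ ((1-α)/(1+p)))
    (hL : (L:ℝ) ≤ T * (n:ℝ)^α)
    (hI : (I:ℝ) ≤ cX^(1/p) * (n:ℝ)^(1/p+α))
    (hK : (K:ℝ) ≤ (n:ℝ) * cX / T^p) :
    (((n + 1) ^ (2*L) * ((2*I+1)*n+1) ^ K : ℕ) : ℝ) ≤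
      (((n : ℝ) + 1) * (2 * cX ^ (1 / p) + 1) ^ (1 / (1 + 1 / p + α))) ^
        ((1 + 1 / p + α) * (4 * cX ^ (1 / p) + 1) ^ (p / (1 + p)) *
          (n : ℝ) ^ ((1 + p * α) / (1 + p))) := by
  have hp0 : 0 < p := lt_of_lt_of_le one_pos hp
  have hn0 : (0:ℝ) < n := by exact_mod_cast hn
  have hkey := key_exponent n hn p cX α hp hc hα0 hα1
  rw [← hTdef] at hkey
  obtain ⟨γ, hγdef⟩ : ∃ x, x = cX ^ (1/p) := ⟨_, rfl⟩
  have hγ : 0 < γ := hγdef ▸ rpow_pos_of_pos hc _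
  obtain ⟨s, hsdef⟩ : ∃ x, x = 1 + 1/p + α := ⟨_, rfl⟩
  have h1p : (0:ℝ) < 1/p := by positivity
  have hs0 : 0 < s := by rw [hsdef]; linarith
  have hs1 : 1 ≤ s := by rw [hsdef]; linarith
  obtain ⟨c, hcdef⟩ : ∃ x, x = (2*γ+1) ^ (1/s) := ⟨_, rfl⟩
  have hc0 : 0 < c := hcdef ▸ rpow_pos_of_pos (by linarith) _
  have hc1 : 1 ≤ c := by
    have h := rpow_le_rpow_of_exponent_le (x := 2*γ+1) (by linarith) (y := 0) (z := 1/s)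
      (by positivity)
    rw [rpow_zero] at h
    rw [hcdef]; exact h
  obtain ⟨b, hbdef⟩ : ∃ x, x = ((n:ℝ)+1) * c := ⟨_, rfl⟩
  have hb0 : 0 < b := by rw [hbdef]; positivity
  have hb1 : 1 ≤ b := by
    rw [hbdef]
    have : (1:ℝ) ≤ (n:ℝ)+1 := by linarith
    nlinarith
  have hcs : c ^ s = 2*γ+1 := by
    rw [hcdef, ← rpow_mul (by linarith : (0:ℝ) ≤ 2*γ+1), one_div_mul_cancel hs0.ne', rpow_one]
  have hnb : (n:ℝ)+1 ≤ b := by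
    rw [hbdef]; nlinarith
  rw [← hγdef] at hI hkey
  rw [← hγdef, ← hsdef, ← hcdef, ← hbdef]
  -- bound on the big base
  have hM : (((2*I+1)*n+1 : ℕ) : ℝ) ≤ b ^ s := by
    have h1 : (n:ℝ)^(1/p+α) * n ≤ ((n:ℝ)+1)^s := by
      have e1 : (n:ℝ)^(1/p+α) * n = (n:ℝ)^s := by
        nth_rewrite 2 [show (n:ℝ) = (n:ℝ)^(1:ℝ) by rw [rpow_one]]
        rw [← rpow_add hn0, hsdef]
        ring_nf
      rw [e1]
      exact rpow_le_rpow hn0.le (by linarith) hs0.le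
    have h2 : (n:ℝ)+1 ≤ ((n:ℝ)+1)^s := by
      have h := rpow_le_rpow_of_exponent_le (x := (n:ℝ)+1) (by linarith) hs1
      rwa [rpow_one] at h
    have hbs : b ^ s = (2*γ+1) * ((n:ℝ)+1)^s := by
      rw [hbdef, mul_rpow (by positivity) hc0.le, hcs]; ring
    rw [hbs]
    push_cast
    have m1 : (I:ℝ) * n ≤ γ * ((n:ℝ)^(1/p+α) * n) := by
      have := mul_le_mul_of_nonneg_right hI hn0.le
      calc (I:ℝ) * n ≤ γ * (n:ℝ)^(1/p+α) * n := this
        _ = γ * ((n:ℝ)^(1/p+α) * n) := by ring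
    have m2 : γ * ((n:ℝ)^(1/p+α) * n) ≤ γ * ((n:ℝ)+1)^s :=
      mul_le_mul_of_nonneg_left h1 hγ.le
    linarith [m1, m2, h2]
  -- main chain
  have hA1 : (((n:ℝ)+1)) ^ (2*L) ≤ b ^ ((2*L : ℕ):ℝ) := by
    rw [rpow_natCast]
    exact pow_le_pow_left₀ (by positivity) hnb _
  have hA2 : (((2*I+1)*n+1 : ℕ) : ℝ) ^ K ≤ b ^ (s * K) := by
    calc (((2*I+1)*n+1 : ℕ) : ℝ) ^ K ≤ (b ^ s) ^ K := pow_le_pow_left₀ (by positivity) hM _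
      _ = b ^ (s * K) := by rw [← rpow_natCast (b ^ s) K, ← rpow_mul hb0.le]
  have hexp : ((2*L : ℕ) : ℝ) + s * K ≤
      s * (4 * γ + 1) ^ (p / (1 + p)) * (n : ℝ) ^ ((1 + p * α) / (1 + p)) := by
    rw [← hsdef] at hkey
    have t1 : ((2*L : ℕ) : ℝ) ≤ 2 * T * (n:ℝ)^α := by push_cast; linarith
    have t2 : s * K ≤ s * ((n:ℝ) * cX / T^p) := mul_le_mul_of_nonneg_left hK hs0.le
    linarith
  calc (((n + 1) ^ (2*L) * ((2*I+1)*n+1) ^ K : ℕ) : ℝ)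
      = (((n:ℝ)+1)) ^ (2*L) * (((2*I+1)*n+1 : ℕ) : ℝ) ^ K := by push_cast; ring
    _ ≤ b ^ ((2*L : ℕ):ℝ) * b ^ (s * K) := by
        apply mul_le_mul hA1 hA2 (by positivity) (by positivity)
    _ = b ^ (((2*L : ℕ):ℝ) + s * K) := by rw [← rpow_add hb0]
    _ ≤ b ^ (s * (4 * γ + 1) ^ (p / (1 + p)) * (n : ℝ) ^ ((1 + p * α) / (1 + p))) :=
        rpow_le_rpow_of_exponent_le hb1 hexp


set_option maxHeartbeats 1000000 in
/-- Lemma 5 (Number of types):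
`|P_n(X_n, c_X)| ≤ ((n+1)c)^{c̃ n^{(1+pα)/(1+p)}}` with
`c = (2 c_X^{1/p} + 1)^{1/(1 + 1/p + α)}` and `c̃ = (1 + 1/p + α)(4 c_X^{1/p} + 1)^{p/(1+p)}`. -/
theorem number_of_types
    (n : ℕ) (hn : 0 < n) (p cX α : ℝ) (hp : 1 ≤ p) (hc : 0 < cX)
    (hα : α ∈ Set.Ioo (0 : ℝ) 1) :
    (constrainedTypes n ((n : ℝ) ^ (-α)) p cX).Finite ∧
    ((constrainedTypes n ((n : ℝ) ^ (-α)) p cX).ncard : ℝ) ≤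
      (((n : ℝ) + 1) * (2 * cX ^ (1 / p) + 1) ^ (1 / (1 + 1 / p + α))) ^
        ((1 + 1 / p + α) * (4 * cX ^ (1 / p) + 1) ^ (p / (1 + p)) *
          (n : ℝ) ^ ((1 + p * α) / (1 + p))) := by
  obtain ⟨hα0, hα1⟩ := hα
  have hp0 : 0 < p := lt_of_lt_of_le one_pos hp
  have hn0 : (0:ℝ) < n := by exact_mod_cast hn
  have h1p : (0:ℝ) < 1/p := by positivity
  set Δ : ℝ := (n:ℝ) ^ (-α) with hΔdef
  have hΔ : 0 < Δ := rpow_pos_of_pos hn0 _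
  have hΔα : (n:ℝ) ^ α * Δ = 1 := by
    rw [hΔdef, ← rpow_add hn0]
    simp
  obtain ⟨T, hTdef⟩ : ∃ x : ℝ,
      x = ((1+1/p+α)/2) ^ (1/(1+p)) * (cX^(1/p)) ^ (p/(1+p)) * (n:ℝ) ^ ((1-α)/(1+p)) :=
    ⟨_, rfl⟩
  have hT : 0 < T := by
    rw [hTdef]
    have c1 : (0:ℝ) < (1+1/p+α)/2 := by linarith
    exact mul_pos (mul_pos (rpow_pos_of_pos c1 _) (rpow_pos_of_pos (rpow_pos_of_pos hc _) _))
      (rpow_pos_of_pos hn0 _)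
  have hTp : (0:ℝ) < T ^ p := rpow_pos_of_pos hT _
  set L : ℕ := ⌊T * (n:ℝ)^α⌋₊ with hLdef
  set I : ℕ := ⌊cX^(1/p) * (n:ℝ)^(1/p+α)⌋₊ with hIdef
  set K : ℕ := ⌊(n:ℝ) * cX / T^p⌋₊ with hKdef
  set S : Set (ℝ → ℝ) := constrainedTypes n Δ p cX with hSdef
  -- common facts
  have hfacts : ∀ P ∈ S, (∀ x, P x * |x|^p ≤ cX) ∧
      (∀ i : ℤ, P ((i:ℝ)*Δ) ≠ 0 → 1/(n:ℝ) ≤ P ((i:ℝ)*Δ)) := by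
    intro P hP
    obtain ⟨⟨h1, h2, h3, h4, h5⟩, h6⟩ := hP
    constructor
    · intro x
      have hgsupp : Function.support (fun x => P x * |x|^p) ⊆ Function.support P := by
        intro y hy
        simp only [Function.mem_support] at hy ⊢
        intro h0
        exact hy (by rw [h0, zero_mul])
      have hgfin : (Function.support (fun x => P x * |x|^p)).Finite := h4.subset hgsupp
      have hg0 : ∀ y, 0 ≤ P y * |y|^p := fun y =>
        mul_nonneg (h1 y) (rpow_nonneg (abs_nonneg y) p)
      exact (single_le_finsum x hgfin hg0).trans h6
    · intro i hi
      obtain ⟨k, hk⟩ := h3 ((i:ℝ)*Δ)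
      have hk1 : 1 ≤ k := by
        rcases Nat.eq_zero_or_pos k with h | h
        · exact absurd (by rw [hk, h]; simp) hi
        · exact h
      rw [hk]
      gcongr
      exact_mod_cast hk1
  -- support bound
  have hsupp : ∀ P ∈ S, ∀ i : ℤ, P ((i : ℝ) * Δ) ≠ 0 → |i| ≤ (I : ℤ) := by
    intro P hP i hi
    obtain ⟨hmom, hlow⟩ := hfacts P hP
    have habs : |(i:ℝ)*Δ| ^ p ≤ (n:ℝ) * cX := by
      have t1 := hmom ((i:ℝ)*Δ)
      have t2 := hlow i hi
      have t3 : (1/(n:ℝ)) * |(i:ℝ)*Δ|^p ≤ P ((i:ℝ)*Δ) * |(i:ℝ)*Δ|^p :=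
        mul_le_mul_of_nonneg_right t2 (rpow_nonneg (abs_nonneg _) p)
      have t4 : (1/(n:ℝ)) * |(i:ℝ)*Δ|^p ≤ cX := t3.trans t1
      calc |(i:ℝ)*Δ| ^ p = (n:ℝ) * ((1/(n:ℝ)) * |(i:ℝ)*Δ|^p) := by field_simp
        _ ≤ (n:ℝ) * cX := mul_le_mul_of_nonneg_left t4 hn0.le
    have habs2 : |(i:ℝ)*Δ| ≤ ((n:ℝ) * cX) ^ (1/p) := by
      have := rpow_le_rpow (rpow_nonneg (abs_nonneg _) p) habs (le_of_lt h1p)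
      rwa [← rpow_mul (abs_nonneg _), mul_one_div_cancel hp0.ne', rpow_one] at this
    have hsplit : ((n:ℝ) * cX) ^ (1/p) = (n:ℝ)^(1/p) * cX^(1/p) :=
      mul_rpow hn0.le hc.le
    have hmulΔ : |(i:ℝ)*Δ| = |(i:ℝ)| * Δ := by
      rw [abs_mul, abs_of_pos hΔ]
    have hreal : |(i:ℝ)| ≤ cX^(1/p) * (n:ℝ)^(1/p+α) := by
      have step : |(i:ℝ)| * Δ * (n:ℝ)^α ≤ (n:ℝ)^(1/p) * cX^(1/p) * (n:ℝ)^α := by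
        apply mul_le_mul_of_nonneg_right _ (rpow_nonneg hn0.le α)
        rw [← hmulΔ, ← hsplit]
        exact habs2
      rw [mul_assoc, mul_comm Δ, hΔα, mul_one] at step
      calc |(i:ℝ)| ≤ (n:ℝ)^(1/p) * cX^(1/p) * (n:ℝ)^α := step
        _ = cX^(1/p) * ((n:ℝ)^(1/p) * (n:ℝ)^α) := by ring
        _ = cX^(1/p) * (n:ℝ)^(1/p+α) := by rw [← rpow_add hn0]
    have htonat : (|i|.toNat : ℝ) ≤ cX^(1/p) * (n:ℝ)^(1/p+α) := by
      have : ((|i|.toNat : ℤ) : ℝ) = |(i:ℝ)| := by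
        rw [Int.toNat_of_nonneg (abs_nonneg i)]
        push_cast
        rfl
      rw [show ((|i|.toNat : ℕ) : ℝ) = ((|i|.toNat : ℤ) : ℝ) by push_cast; rfl, this]
      exact hreal
    have : |i|.toNat ≤ I := Nat.le_floor htonat
    omega
  -- big support bound
  have hbig : ∀ P ∈ S,
      ((Finset.Icc (-(I : ℤ)) I).filter
        (fun i => (L : ℤ) < |i| ∧ P ((i : ℝ) * Δ) ≠ 0)).card ≤ K := by
    intro P hP
    obtain ⟨hmom, hlow⟩ := hfacts P hP
    obtain ⟨⟨h1, h2, h3, h4, h5⟩, h6⟩ := hP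
    set F : Finset ℤ := (Finset.Icc (-(I : ℤ)) I).filter
        (fun i => (L : ℤ) < |i| ∧ P ((i : ℝ) * Δ) ≠ 0) with hFdef
    have hgsupp : Function.support (fun x => P x * |x|^p) ⊆ Function.support P := by
      intro y hy
      simp only [Function.mem_support] at hy ⊢
      intro h0
      exact hy (by rw [h0, zero_mul])
    have hgfin : (Function.support (fun x => P x * |x|^p)).Finite := h4.subset hgsupp
    have hg0 : ∀ y, 0 ≤ P y * |y|^p := fun y =>
      mul_nonneg (h1 y) (rpow_nonneg (abs_nonneg y) p)
    have step : ∀ i ∈ F, (1/(n:ℝ)) * T^p ≤ P ((i:ℝ)*Δ) * |(i:ℝ)*Δ|^p := by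
      intro i hi
      rw [hFdef, Finset.mem_filter] at hi
      obtain ⟨_, hiL, hiP⟩ := hi
      have hlow' := hlow i hiP
      have hTabs : T ≤ |(i:ℝ)*Δ| := by
        have hfl : T * (n:ℝ)^α < (L:ℝ) + 1 := by
          rw [hLdef]
          exact Nat.lt_floor_add_one _
        have hLi : (L:ℝ) + 1 ≤ |(i:ℝ)| := by
          have : (L:ℤ) + 1 ≤ |i| := hiL
          calc (L:ℝ) + 1 = ((L + 1 : ℤ) : ℝ) := by push_cast; ring
            _ ≤ ((|i| : ℤ) : ℝ) := by exact_mod_cast this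
            _ = |(i:ℝ)| := by rw [Int.cast_abs]
        have h1' : T * (n:ℝ)^α ≤ |(i:ℝ)| := by linarith
        have h2' : T * (n:ℝ)^α * Δ ≤ |(i:ℝ)| * Δ := mul_le_mul_of_nonneg_right h1' hΔ.le
        rw [mul_assoc, hΔα, mul_one] at h2'
        rw [abs_mul, abs_of_pos hΔ]
        exact h2'
      have hTabsp : T^p ≤ |(i:ℝ)*Δ|^p := rpow_le_rpow hT.le hTabs hp0.le
      exact mul_le_mul hlow' hTabsp (rpow_nonneg hT.le p) (h1 _)
    have hinjΔ : ∀ x ∈ F, ∀ y ∈ F, (x:ℝ) * Δ = (y:ℝ) * Δ → x = y := by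
      intro x _ y _ hxy
      have : (x:ℝ) = y := mul_right_cancel₀ hΔ.ne' hxy
      exact_mod_cast this
    have hcardsum : (F.card : ℝ) * ((1/(n:ℝ)) * T^p) ≤ cX := by
      calc (F.card : ℝ) * ((1/(n:ℝ)) * T^p)
          = ∑ _i ∈ F, ((1/(n:ℝ)) * T^p) := by
            rw [Finset.sum_const, nsmul_eq_mul]
        _ ≤ ∑ i ∈ F, P ((i:ℝ)*Δ) * |(i:ℝ)*Δ|^p := Finset.sum_le_sum step
        _ = ∑ x ∈ F.image (fun i : ℤ => (i:ℝ)*Δ), P x * |x|^p :=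
            by rw [Finset.sum_image hinjΔ]
        _ ≤ ∑ x ∈ hgfin.toFinset ∪ F.image (fun i : ℤ => (i:ℝ)*Δ), P x * |x|^p := by
            apply Finset.sum_le_sum_of_subset_of_nonneg Finset.subset_union_right
            intro x _ _
            exact hg0 x
        _ = ∑ᶠ x, P x * |x|^p := by
            rw [finsum_eq_sum_of_support_subset]
            intro x hx
            rw [Finset.coe_union, hgfin.coe_toFinset]
            exact Or.inl hx
        _ ≤ cX := h6
    have hcard2 : (F.card : ℝ) ≤ (n:ℝ) * cX / T^p := by
      rw [le_div_iff₀ hTp]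
      have e : (F.card:ℝ) * T^p = ((F.card:ℝ) * ((1/(n:ℝ)) * T^p)) * n := by
        field_simp
      rw [e]
      calc ((F.card:ℝ) * ((1/(n:ℝ)) * T^p)) * n ≤ cX * n :=
            mul_le_mul_of_nonneg_right hcardsum hn0.le
        _ = (n:ℝ) * cX := by ring
    exact Nat.le_floor hcard2
  have count := count_types n L I K hn Δ S (fun P hP => hP.1) hsupp hbig
  refine ⟨count.1, ?_⟩
  have hL : (L:ℝ) ≤ T * (n:ℝ)^α :=
    Nat.floor_le (mul_nonneg hT.le (rpow_nonneg hn0.le α))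
  have hI : (I:ℝ) ≤ cX^(1/p) * (n:ℝ)^(1/p+α) :=
    Nat.floor_le (mul_nonneg (rpow_nonneg hc.le _) (rpow_nonneg hn0.le _))
  have hK : (K:ℝ) ≤ (n:ℝ) * cX / T^p :=
    Nat.floor_le (by positivity)
  calc (S.ncard : ℝ) ≤ (((n + 1) ^ (2*L) * ((2*I+1)*n+1) ^ K : ℕ) : ℝ) := by
        exact_mod_cast count.2
    _ ≤ _ := chain n L I K hn p cX α T hp hc hα0 hα1 hTdef hL hI hK
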